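/- Consider the residual-sketch iteration: given A ∈ ℝ^{m×n}, b ∈ ℝ^m, x₀ ∈ ℝ^n, set r₀ = b − A x₀ and for j ≥ 1 let S_j = [r₀ … r_{j−1}], p_j = Aᵀ S_j (S_jᵀ A Aᵀ S_j)⁻¹ S_jᵀ r_{j−1}, x_j = x_{j−1} + p_j, r_j = b − A x_j, assuming the Gram matrices S_jᵀ A Aᵀ S_j are invertible for j = 1,…,k. Then the residuals are mutually orthogonal: r_iᵀ r_j = 0 for all 0 ≤ i < j ≤ k. -/
import Mathlib


open Matrix

/-- `colCat r k` is the matrix `[r 0 … r (k-1)]` whose `l`-th column is `r l`. -/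
def colCat {m : ℕ} (r : ℕ → Fin m → ℝ) (k : ℕ) : Matrix (Fin m) (Fin k) ℝ :=
  Matrix.of fun i l => r l.val i

/-- In the residual-sketch (PLSS) iteration the residuals are mutually
orthogonal: `r_iᵀ r_j = 0` for all `0 ≤ i < j ≤ k`. -/
theorem stmt12 (m n k : ℕ)
    (A : Matrix (Fin m) (Fin n) ℝ) (b : Fin m → ℝ)
    (x p : ℕ → Fin n → ℝ) (r : ℕ → Fin m → ℝ)
    (hr : ∀ j, r j = b - A.mulVec (x j))
    (hinv : ∀ j, 1 ≤ j → j ≤ k → IsUnit ((colCat r j)ᵀ * A * Aᵀ * colCat r j))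
    (hp : ∀ j, 1 ≤ j → j ≤ k →
      p j = (Aᵀ * colCat r j).mulVec
        (((colCat r j)ᵀ * A * Aᵀ * colCat r j)⁻¹.mulVec
          ((colCat r j)ᵀ.mulVec (r (j - 1)))))
    (hx : ∀ j, 1 ≤ j → j ≤ k → x j = x (j - 1) + p j) :
    ∀ i j, i < j → j ≤ k → r i ⬝ᵥ r j = 0 := by
  intro i j hij hjk
  have hj1 : 1 ≤ j := by omega
  set S := colCat r j with hS
  set G := Sᵀ * A * Aᵀ * S with hGdef
  have hG : IsUnit G := hinv j hj1 hjk
  have hGdet : IsUnit G.det := (Matrix.isUnit_iff_isUnit_det G).mp hG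
  have hrec : r j = r (j - 1) - A.mulVec (p j) := by
    rw [hr j, hr (j - 1), hx j hj1 hjk, Matrix.mulVec_add]
    abel
  have key : Sᵀ.mulVec (r j) = 0 := by
    rw [hrec, hp j hj1 hjk, Matrix.mulVec_sub]
    have h2 : Sᵀ.mulVec (A.mulVec ((Aᵀ * S).mulVec
        (G⁻¹.mulVec (Sᵀ.mulVec (r (j - 1)))))) = Sᵀ.mulVec (r (j - 1)) := by
      rw [Matrix.mulVec_mulVec, Matrix.mulVec_mulVec, Matrix.mulVec_mulVec]
      have hGeq : Sᵀ * A * (Aᵀ * S) * G⁻¹ = 1 := by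
        rw [← Matrix.mul_assoc, ← hGdef]
        exact Matrix.mul_nonsing_inv G hGdet
      rw [hGeq, Matrix.one_mulVec]
    rw [h2, sub_self]
  have := congrFun key ⟨i, hij⟩
  simpa [hS, colCat, Matrix.mulVec, dotProduct, Matrix.transpose] using this
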